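/- arXiv:2212.02368 — 2 statements merged into one kernel-verified Lean document; each statement's English description precedes it below -/
import Mathlib

section
/- Let n ≤ 4 and let Q be an n×n real symmetric matrix with Qᵢᵢ = 1 for every i such that v Q vᵀ ≥ 1 for every nonzero vector v ∈ {−1, 0, 1}ⁿ. Then Q is positive definite and v Q vᵀ ≥ 1 for every nonzero row vector v ∈ ℤⁿ; consequently, for n ≤ 4 the set Ω₂ coincides with the solution set of this finite system of linear conditions and is a convex polytope. -/
open Matrix

/-- The quadratic form `v Q vᵀ` of a real matrix evaluated at an integer vector. -/
noncomputable def intQuadForm {n : ℕ} (Q : Matrix (Fin n) (Fin n) ℝ) (v : Fin n → ℤ) : ℝ :=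
  dotProduct (fun i => (v i : ℝ)) (Q.mulVec fun i => (v i : ℝ))


def conjQ {n : ℕ} (Q : Matrix (Fin n) (Fin n) ℝ) (σ : Equiv.Perm (Fin n)) (s : Fin n → ℤ) :
    Matrix (Fin n) (Fin n) ℝ :=
  Matrix.of fun i j => (s i : ℝ) * (s j : ℝ) * Q (σ i) (σ j)

lemma rqf_eq {n : ℕ} (Q : Matrix (Fin n) (Fin n) ℝ) (y : Fin n → ℝ) :
    dotProduct y (Q.mulVec y) = ∑ i, ∑ j, y i * Q i j * y j := by
  simp [dotProduct, Matrix.mulVec, Finset.mul_sum, mul_assoc]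

lemma conj_transfer {n : ℕ} (Q : Matrix (Fin n) (Fin n) ℝ) (σ : Equiv.Perm (Fin n))
    (s : Fin n → ℤ) (x : Fin n → ℝ) :
    dotProduct x ((conjQ Q σ s).mulVec x)
      = dotProduct (fun k => (s (σ.symm k) : ℝ) * x (σ.symm k))
          (Q.mulVec fun k => (s (σ.symm k) : ℝ) * x (σ.symm k)) := by
  rw [rqf_eq, rqf_eq]
  refine Fintype.sum_equiv σ _ _ fun i => ?_
  refine Fintype.sum_equiv σ _ _ fun j => ?_
  simp only [Equiv.symm_apply_apply, conjQ, Matrix.of_apply]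
  ring

lemma conj_isSymm {n : ℕ} {Q : Matrix (Fin n) (Fin n) ℝ} (h : Q.IsSymm)
    (σ : Equiv.Perm (Fin n)) (s : Fin n → ℤ) : (conjQ Q σ s).IsSymm := by
  refine Matrix.IsSymm.ext fun i j => ?_
  simp only [conjQ, Matrix.of_apply, h.apply (σ i) (σ j)]
  ring

lemma conj_diag {n : ℕ} {Q : Matrix (Fin n) (Fin n) ℝ} (hdiag : ∀ i, Q i i = 1)
    (σ : Equiv.Perm (Fin n)) {s : Fin n → ℤ} (hs : ∀ i, s i = 1 ∨ s i = -1) (i : Fin n) :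
    conjQ Q σ s i i = 1 := by
  rcases hs i with h | h <;> simp [conjQ, hdiag, h]

lemma conj_cube {n : ℕ} {Q : Matrix (Fin n) (Fin n) ℝ}
    (hcube : ∀ v : Fin n → ℤ, v ≠ 0 → (∀ i, v i = -1 ∨ v i = 0 ∨ v i = 1) →
      1 ≤ intQuadForm Q v)
    (σ : Equiv.Perm (Fin n)) {s : Fin n → ℤ} (hs : ∀ i, s i = 1 ∨ s i = -1) :
    ∀ w : Fin n → ℤ, w ≠ 0 → (∀ i, w i = -1 ∨ w i = 0 ∨ w i = 1) →
      1 ≤ intQuadForm (conjQ Q σ s) w := by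
  intro w hw hwmem
  set w' : Fin n → ℤ := fun k => s (σ.symm k) * w (σ.symm k) with hw'
  have key : intQuadForm (conjQ Q σ s) w = intQuadForm Q w' := by
    unfold intQuadForm
    rw [conj_transfer]
    congr 1
    · funext k; push_cast [hw']; ring
    · congr 1; funext k; push_cast [hw']; ring
  rw [key]
  refine hcube w' ?_ ?_
  · intro h0
    apply hw
    funext i
    have h1 := congrFun h0 (σ i)
    simp only [hw', Equiv.symm_apply_apply, Pi.zero_apply] at h1 ⊢
    rcases hs i with h | h <;> rw [h] at h1 <;> omega
  · intro k
    rcases hs (σ.symm k) with h | h <;> rcases hwmem (σ.symm k) with h2 | h2 | h2 <;>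
      simp [hw', h, h2]
lemma reduce_real {n : ℕ} (Q : Matrix (Fin n) (Fin n) ℝ) (hsymm : Q.IsSymm)
    (hdiag : ∀ i, Q i i = 1)
    (hcube : ∀ v : Fin n → ℤ, v ≠ 0 → (∀ i, v i = -1 ∨ v i = 0 ∨ v i = 1) →
      1 ≤ intQuadForm Q v) (x : Fin n → ℝ) :
    ∃ (Q' : Matrix (Fin n) (Fin n) ℝ) (x' : Fin n → ℝ),
      Q'.IsSymm ∧ (∀ i, Q' i i = 1) ∧
      (∀ w : Fin n → ℤ, w ≠ 0 → (∀ i, w i = -1 ∨ w i = 0 ∨ w i = 1) →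
        1 ≤ intQuadForm Q' w) ∧
      Monotone x' ∧ (∀ k, 0 ≤ x' k) ∧ (∑ k, (x' k)^2 = ∑ k, (x k)^2) ∧
      dotProduct x' (Q'.mulVec x') = dotProduct x (Q.mulVec x) := by
  set σ : Equiv.Perm (Fin n) := Tuple.sort (fun i => |x i|) with hσ
  set s : Fin n → ℤ := fun i => if x (σ i) < 0 then -1 else 1 with hsdef
  have hs : ∀ i, s i = 1 ∨ s i = -1 := by
    intro i; simp only [hsdef]; split <;> simp
  refine ⟨conjQ Q σ s, fun k => |x (σ k)|, conj_isSymm hsymm σ s,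
    conj_diag hdiag σ hs, conj_cube hcube σ hs, ?_, fun k => abs_nonneg _, ?_, ?_⟩
  · exact Tuple.monotone_sort (fun i => |x i|)
  · exact Fintype.sum_equiv σ _ _ fun k => by rw [sq_abs]
  · rw [conj_transfer]
    have key : (fun k => (s (σ.symm k) : ℝ) * |x (σ (σ.symm k))|) = x := by
      funext k
      simp only [Equiv.apply_symm_apply, hsdef]
      split <;> rename_i h
      · push_cast; rw [abs_of_neg h]; ring
      · push_cast; rw [abs_of_nonneg (not_lt.1 h)]; ring
    simp only [key]
lemma reduce_int {n : ℕ} (Q : Matrix (Fin n) (Fin n) ℝ) (hsymm : Q.IsSymm)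
    (hdiag : ∀ i, Q i i = 1)
    (hcube : ∀ v : Fin n → ℤ, v ≠ 0 → (∀ i, v i = -1 ∨ v i = 0 ∨ v i = 1) →
      1 ≤ intQuadForm Q v) (v : Fin n → ℤ) (hv : v ≠ 0) :
    ∃ (Q' : Matrix (Fin n) (Fin n) ℝ) (v' : Fin n → ℤ),
      Q'.IsSymm ∧ (∀ i, Q' i i = 1) ∧
      (∀ w : Fin n → ℤ, w ≠ 0 → (∀ i, w i = -1 ∨ w i = 0 ∨ w i = 1) →
        1 ≤ intQuadForm Q' w) ∧
      Monotone v' ∧ (∀ k, 0 ≤ v' k) ∧ v' ≠ 0 ∧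
      intQuadForm Q' v' = intQuadForm Q v := by
  set σ : Equiv.Perm (Fin n) := Tuple.sort (fun i => |v i|) with hσ
  set s : Fin n → ℤ := fun i => if v (σ i) < 0 then -1 else 1 with hsdef
  have hs : ∀ i, s i = 1 ∨ s i = -1 := by
    intro i; simp only [hsdef]; split <;> simp
  refine ⟨conjQ Q σ s, fun k => |v (σ k)|, conj_isSymm hsymm σ s,
    conj_diag hdiag σ hs, conj_cube hcube σ hs, ?_, fun k => abs_nonneg _, ?_, ?_⟩
  · exact Tuple.monotone_sort (fun i => |v i|)
  · intro h0
    apply hv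
    funext i
    have h1 := congrFun h0 (σ.symm i)
    simp only [Equiv.apply_symm_apply, Pi.zero_apply] at h1
    exact abs_eq_zero.1 h1
  · unfold intQuadForm
    rw [conj_transfer]
    have key : (fun k => (s (σ.symm k) : ℝ) * ((|v (σ (σ.symm k))| : ℤ) : ℝ))
        = fun k => (v k : ℝ) := by
      funext k
      simp only [Equiv.apply_symm_apply, hsdef]
      split <;> rename_i h
      · push_cast
        rw [abs_of_neg (show ((v k : ℝ)) < 0 by exact_mod_cast h)]; ring
      · push_cast
        rw [abs_of_nonneg (show (0:ℝ) ≤ (v k : ℝ) by exact_mod_cast not_lt.1 h)]; ring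
    simp only [key]
lemma quad_lower4 (Q : Matrix (Fin 4) (Fin 4) ℝ) (hsymm : Q.IsSymm)
    (hdiag : ∀ i, Q i i = 1)
    (hcube : ∀ v : Fin 4 → ℤ, v ≠ 0 → (∀ i, v i = -1 ∨ v i = 0 ∨ v i = 1) →
      1 ≤ intQuadForm Q v) (x : Fin 4 → ℝ)
    (h0 : 0 ≤ x 0) (h01 : x 0 ≤ x 1) (h12 : x 1 ≤ x 2) (h23 : x 2 ≤ x 3) :
    (x 0)^2 + (x 1 - x 0)^2 + (x 2 - x 1)^2 + (x 3 - x 2)^2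
      + x 0 * (x 1 - x 0) + (x 1 - x 0) * (x 2 - x 1) + (x 2 - x 1) * (x 3 - x 2)
      - x 0 * (x 3 - x 2) ≤ dotProduct x (Q.mulVec x) := by
  have hE : dotProduct x (Q.mulVec x) = x 0^2 + x 1^2 + x 2^2 + x 3^2
      + 2*Q 0 1*x 0*x 1 + 2*Q 0 2*x 0*x 2 + 2*Q 0 3*x 0*x 3
      + 2*Q 1 2*x 1*x 2 + 2*Q 1 3*x 1*x 3 + 2*Q 2 3*x 2*x 3 := by
    simp only [dotProduct, Matrix.mulVec, Fin.sum_univ_four, hdiag,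
      hsymm.apply 0 1, hsymm.apply 0 2, hsymm.apply 0 3,
      hsymm.apply 1 2, hsymm.apply 1 3, hsymm.apply 2 3]
    ring
  have c1 : (1:ℝ) ≤ 4 + 2*(Q 0 1 + Q 0 2 + Q 0 3 + Q 1 2 + Q 1 3 + Q 2 3) := by
    have h := hcube ![1,1,1,1] (by intro h; simpa using congrFun h 3) (by decide)
    have e : intQuadForm Q ![1,1,1,1] = 4 + 2*(Q 0 1 + Q 0 2 + Q 0 3 + Q 1 2 + Q 1 3 + Q 2 3) := by
      simp only [intQuadForm, dotProduct, Matrix.mulVec, Fin.sum_univ_four, hdiag,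
        hsymm.apply 0 1, hsymm.apply 0 2, hsymm.apply 0 3,
        hsymm.apply 1 2, hsymm.apply 1 3, hsymm.apply 2 3,
        Matrix.cons_val_zero, Matrix.cons_val_one, Matrix.head_cons,
        Matrix.cons_val_two, Matrix.tail_cons, Matrix.cons_val_three]
      push_cast
      ring
    linarith [e ▸ h]
  have c2 : (1:ℝ) ≤ 3 + 2*(Q 1 2 + Q 1 3 + Q 2 3) := by
    have h := hcube ![0,1,1,1] (by intro h; simpa using congrFun h 3) (by decide)
    have e : intQuadForm Q ![0,1,1,1] = 3 + 2*(Q 1 2 + Q 1 3 + Q 2 3) := by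
      simp only [intQuadForm, dotProduct, Matrix.mulVec, Fin.sum_univ_four, hdiag,
        hsymm.apply 0 1, hsymm.apply 0 2, hsymm.apply 0 3,
        hsymm.apply 1 2, hsymm.apply 1 3, hsymm.apply 2 3,
        Matrix.cons_val_zero, Matrix.cons_val_one, Matrix.head_cons,
        Matrix.cons_val_two, Matrix.tail_cons, Matrix.cons_val_three]
      push_cast
      ring
    linarith [e ▸ h]
  have c3 : (1:ℝ) ≤ 3 + 2*(Q 0 2 + Q 0 3 + Q 2 3) := by
    have h := hcube ![1,0,1,1] (by intro h; simpa using congrFun h 3) (by decide)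
    have e : intQuadForm Q ![1,0,1,1] = 3 + 2*(Q 0 2 + Q 0 3 + Q 2 3) := by
      simp only [intQuadForm, dotProduct, Matrix.mulVec, Fin.sum_univ_four, hdiag,
        hsymm.apply 0 1, hsymm.apply 0 2, hsymm.apply 0 3,
        hsymm.apply 1 2, hsymm.apply 1 3, hsymm.apply 2 3,
        Matrix.cons_val_zero, Matrix.cons_val_one, Matrix.head_cons,
        Matrix.cons_val_two, Matrix.tail_cons, Matrix.cons_val_three]
      push_cast
      ring
    linarith [e ▸ h]
  have c4 : (1:ℝ) ≤ 2 + 2*(Q 2 3) := by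
    have h := hcube ![0,0,1,1] (by intro h; simpa using congrFun h 3) (by decide)
    have e : intQuadForm Q ![0,0,1,1] = 2 + 2*(Q 2 3) := by
      simp only [intQuadForm, dotProduct, Matrix.mulVec, Fin.sum_univ_four, hdiag,
        hsymm.apply 0 1, hsymm.apply 0 2, hsymm.apply 0 3,
        hsymm.apply 1 2, hsymm.apply 1 3, hsymm.apply 2 3,
        Matrix.cons_val_zero, Matrix.cons_val_one, Matrix.head_cons,
        Matrix.cons_val_two, Matrix.tail_cons, Matrix.cons_val_three]
      push_cast
      ring
    linarith [e ▸ h]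
  have c5 : (1:ℝ) ≤ 2 + 2*(Q 1 3) := by
    have h := hcube ![0,1,0,1] (by intro h; simpa using congrFun h 3) (by decide)
    have e : intQuadForm Q ![0,1,0,1] = 2 + 2*(Q 1 3) := by
      simp only [intQuadForm, dotProduct, Matrix.mulVec, Fin.sum_univ_four, hdiag,
        hsymm.apply 0 1, hsymm.apply 0 2, hsymm.apply 0 3,
        hsymm.apply 1 2, hsymm.apply 1 3, hsymm.apply 2 3,
        Matrix.cons_val_zero, Matrix.cons_val_one, Matrix.head_cons,
        Matrix.cons_val_two, Matrix.tail_cons, Matrix.cons_val_three]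
      push_cast
      ring
    linarith [e ▸ h]
  have c6 : (1:ℝ) ≤ 2 + 2*(Q 0 3) := by
    have h := hcube ![1,0,0,1] (by intro h; simpa using congrFun h 3) (by decide)
    have e : intQuadForm Q ![1,0,0,1] = 2 + 2*(Q 0 3) := by
      simp only [intQuadForm, dotProduct, Matrix.mulVec, Fin.sum_univ_four, hdiag,
        hsymm.apply 0 1, hsymm.apply 0 2, hsymm.apply 0 3,
        hsymm.apply 1 2, hsymm.apply 1 3, hsymm.apply 2 3,
        Matrix.cons_val_zero, Matrix.cons_val_one, Matrix.head_cons,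
        Matrix.cons_val_two, Matrix.tail_cons, Matrix.cons_val_three]
      push_cast
      ring
    linarith [e ▸ h]
  have hb : (0:ℝ) ≤ x 1 - x 0 := by linarith
  have hcc : (0:ℝ) ≤ x 2 - x 1 := by linarith
  have hdd : (0:ℝ) ≤ x 3 - x 2 := by linarith
  have p0 : (0:ℝ) ≤ ((x 0) * (x 0)) * ((4 + 2*(Q 0 1 + Q 0 2 + Q 0 3 + Q 1 2 + Q 1 3 + Q 2 3)) - 1) :=
    mul_nonneg (mul_nonneg h0 h0) (by linarith)
  have p1 : (0:ℝ) ≤ ((x 1 - x 0) * (x 1 - x 0)) * ((3 + 2*(Q 1 2 + Q 1 3 + Q 2 3)) - 1) :=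
    mul_nonneg (mul_nonneg hb hb) (by linarith)
  have p2 : (0:ℝ) ≤ ((x 2 - x 1) * (x 2 - x 1)) * ((2 + 2*(Q 2 3)) - 1) :=
    mul_nonneg (mul_nonneg hcc hcc) (by linarith)
  have p3 : (0:ℝ) ≤ ((x 0) * (x 1 - x 0)) * ((4 + 2*(Q 0 1 + Q 0 2 + Q 0 3 + Q 1 2 + Q 1 3 + Q 2 3)) - 1) :=
    mul_nonneg (mul_nonneg h0 hb) (by linarith)
  have p4 : (0:ℝ) ≤ ((x 0) * (x 1 - x 0)) * ((3 + 2*(Q 1 2 + Q 1 3 + Q 2 3)) - 1) :=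
    mul_nonneg (mul_nonneg h0 hb) (by linarith)
  have p5 : (0:ℝ) ≤ ((x 0) * (x 2 - x 1)) * ((3 + 2*(Q 1 2 + Q 1 3 + Q 2 3)) - 1) :=
    mul_nonneg (mul_nonneg h0 hcc) (by linarith)
  have p6 : (0:ℝ) ≤ ((x 0) * (x 2 - x 1)) * ((3 + 2*(Q 0 2 + Q 0 3 + Q 2 3)) - 1) :=
    mul_nonneg (mul_nonneg h0 hcc) (by linarith)
  have p7 : (0:ℝ) ≤ ((x 0) * (x 3 - x 2)) * ((2 + 2*(Q 2 3)) - 1) :=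
    mul_nonneg (mul_nonneg h0 hdd) (by linarith)
  have p8 : (0:ℝ) ≤ ((x 0) * (x 3 - x 2)) * ((2 + 2*(Q 1 3)) - 1) :=
    mul_nonneg (mul_nonneg h0 hdd) (by linarith)
  have p9 : (0:ℝ) ≤ ((x 0) * (x 3 - x 2)) * ((2 + 2*(Q 0 3)) - 1) :=
    mul_nonneg (mul_nonneg h0 hdd) (by linarith)
  have p10 : (0:ℝ) ≤ ((x 1 - x 0) * (x 2 - x 1)) * ((3 + 2*(Q 1 2 + Q 1 3 + Q 2 3)) - 1) :=
    mul_nonneg (mul_nonneg hb hcc) (by linarith)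
  have p11 : (0:ℝ) ≤ ((x 1 - x 0) * (x 2 - x 1)) * ((2 + 2*(Q 2 3)) - 1) :=
    mul_nonneg (mul_nonneg hb hcc) (by linarith)
  have p12 : (0:ℝ) ≤ ((x 1 - x 0) * (x 3 - x 2)) * ((2 + 2*(Q 2 3)) - 1) :=
    mul_nonneg (mul_nonneg hb hdd) (by linarith)
  have p13 : (0:ℝ) ≤ ((x 1 - x 0) * (x 3 - x 2)) * ((2 + 2*(Q 1 3)) - 1) :=
    mul_nonneg (mul_nonneg hb hdd) (by linarith)
  have p14 : (0:ℝ) ≤ ((x 2 - x 1) * (x 3 - x 2)) * ((2 + 2*(Q 2 3)) - 1) :=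
    mul_nonneg (mul_nonneg hcc hdd) (by linarith)
  rw [hE] at *
  linarith [p0, p1, p2, p3, p4, p5, p6, p7, p8, p9, p10, p11, p12, p13, p14]
lemma base_int (a b c d : ℤ) (ha : 0 ≤ a) (hb : 0 ≤ b) (hc : 0 ≤ c) (hd : 0 ≤ d)
    (hsum : 1 ≤ a + b + c + d) :
    1 ≤ a^2 + b^2 + c^2 + d^2 + a*b + b*c + c*d - a*d := by
  by_cases hb1 : 1 ≤ b
  · have h1 : 1 ≤ b * b := by nlinarith
    nlinarith [mul_nonneg ha hb, mul_nonneg hb hc, mul_nonneg hc hd, sq_nonneg (a - d),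
      sq_nonneg c]
  · by_cases hc1 : 1 ≤ c
    · have h1 : 1 ≤ c * c := by nlinarith
      nlinarith [mul_nonneg ha hb, mul_nonneg hb hc, mul_nonneg hc hd, sq_nonneg (a - d),
        sq_nonneg b]
    · have hb0 : b = 0 := by omega
      have hc0 : c = 0 := by omega
      subst hb0; subst hc0
      by_cases ha1 : 1 ≤ a
      · by_cases hd1 : 1 ≤ d
        · have had : 1 ≤ a * d := by nlinarith
          nlinarith [sq_nonneg (a - d)]
        · have hd0 : d = 0 := by omega
          subst hd0
          nlinarith
      · have ha0 : a = 0 := by omega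
        subst ha0
        nlinarith

lemma base_real (a b c d : ℝ) (ha : 0 ≤ a) (hb : 0 ≤ b) (hc : 0 ≤ c) (hd : 0 ≤ d) :
    a^2 + (a+b)^2 + (a+b+c)^2 + (a+b+c+d)^2
      ≤ 32 * (a^2 + b^2 + c^2 + d^2 + a*b + b*c + c*d - a*d) := by
  nlinarith [sq_nonneg (a-b), sq_nonneg (a-c), sq_nonneg (a-d), sq_nonneg (b-c),
    sq_nonneg (b-d), sq_nonneg (c-d), mul_nonneg ha hb, mul_nonneg hb hc,
    mul_nonneg hc hd, mul_nonneg ha hc, mul_nonneg hb hd, mul_nonneg ha hd,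
    sq_nonneg (a+b+c+d), sq_nonneg (a - d + b), sq_nonneg (a - d + c)]
lemma main4 (Q : Matrix (Fin 4) (Fin 4) ℝ) (hsymm : Q.IsSymm) (hdiag : ∀ i, Q i i = 1)
    (hcube : ∀ v : Fin 4 → ℤ, v ≠ 0 → (∀ i, v i = -1 ∨ v i = 0 ∨ v i = 1) →
      1 ≤ intQuadForm Q v) :
    Q.PosDef ∧ ∀ v : Fin 4 → ℤ, v ≠ 0 → 1 ≤ intQuadForm Q v := by
  constructor
  · refine Matrix.PosDef.of_dotProduct_mulVec_pos ?_ ?_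
    · ext i j
      simp only [Matrix.conjTranspose_apply, star_trivial]
      exact hsymm.apply i j
    · intro x hx
      obtain ⟨Q', x', hS, hD, hC, hmono, hnn, hsum, heq⟩ := reduce_real Q hsymm hdiag hcube x
      have lower := quad_lower4 Q' hS hD hC x' (hnn 0)
        (hmono (show (0:Fin 4) ≤ 1 by decide)) (hmono (show (1:Fin 4) ≤ 2 by decide))
        (hmono (show (2:Fin 4) ≤ 3 by decide))
      have breal := base_real (x' 0) (x' 1 - x' 0) (x' 2 - x' 1) (x' 3 - x' 2) (hnn 0)
        (by have := hmono (show (0:Fin 4) ≤ 1 by decide); linarith)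
        (by have := hmono (show (1:Fin 4) ≤ 2 by decide); linarith)
        (by have := hmono (show (2:Fin 4) ≤ 3 by decide); linarith)
      have hpos : 0 < ∑ i, (x i)^2 := by
        have hex : ∃ i, x i ≠ 0 := by
          by_contra h; push_neg at h; exact hx (funext h)
        obtain ⟨i, hi⟩ := hex
        exact Finset.sum_pos' (fun j _ => sq_nonneg _) ⟨i, Finset.mem_univ i, by positivity⟩
      have e1 : ∑ k, (x' k)^2 = x' 0^2 + x' 1^2 + x' 2^2 + x' 3^2 := by
        rw [Fin.sum_univ_four]
      have : 0 < dotProduct x (Q.mulVec x) := by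
        rw [← heq]
        rw [e1, Fin.sum_univ_four] at hsum
        rw [Fin.sum_univ_four] at hpos
        nlinarith [lower, breal, hpos, hsum]
      simpa [star_trivial] using this
  · intro v hv
    obtain ⟨Q', v', hS, hD, hC, hmono, hnn, hne, heq⟩ := reduce_int Q hsymm hdiag hcube v hv
    have h01 : v' 0 ≤ v' 1 := hmono (show (0:Fin 4) ≤ 1 by decide)
    have h12 : v' 1 ≤ v' 2 := hmono (show (1:Fin 4) ≤ 2 by decide)
    have h23 : v' 2 ≤ v' 3 := hmono (show (2:Fin 4) ≤ 3 by decide)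
    have h3 : 1 ≤ v' 3 := by
      have hex : ∃ k, v' k ≠ 0 := by
        by_contra h; push_neg at h; exact hne (funext h)
      obtain ⟨k, hk⟩ := hex
      have hk3 : v' k ≤ v' 3 := hmono (show k ≤ 3 by omega)
      have := hnn k
      omega
    have bint := base_int (v' 0) (v' 1 - v' 0) (v' 2 - v' 1) (v' 3 - v' 2)
      (hnn 0) (by omega) (by omega) (by omega) (by omega)
    have lower := quad_lower4 Q' hS hD hC (fun i => (v' i : ℝ))
      (by show (0:ℝ) ≤ (v' 0 : ℝ); exact_mod_cast hnn 0)
      (by show (v' 0 : ℝ) ≤ (v' 1 : ℝ); exact_mod_cast h01)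
      (by show (v' 1 : ℝ) ≤ (v' 2 : ℝ); exact_mod_cast h12)
      (by show (v' 2 : ℝ) ≤ (v' 3 : ℝ); exact_mod_cast h23)
    rw [← heq]
    show (1:ℝ) ≤ dotProduct (fun i => ((v' i : ℤ) : ℝ)) (Q'.mulVec fun i => ((v' i : ℤ) : ℝ))
    have bcast : (1:ℝ) ≤ ((v' 0 : ℝ))^2 + ((v' 1 : ℝ) - (v' 0 : ℝ))^2
        + ((v' 2 : ℝ) - (v' 1 : ℝ))^2 + ((v' 3 : ℝ) - (v' 2 : ℝ))^2
        + (v' 0 : ℝ) * ((v' 1 : ℝ) - (v' 0 : ℝ))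
        + ((v' 1 : ℝ) - (v' 0 : ℝ)) * ((v' 2 : ℝ) - (v' 1 : ℝ))
        + ((v' 2 : ℝ) - (v' 1 : ℝ)) * ((v' 3 : ℝ) - (v' 2 : ℝ))
        - (v' 0 : ℝ) * ((v' 3 : ℝ) - (v' 2 : ℝ)) := by
      exact_mod_cast bint
    linarith [lower, bcast]
lemma quad_lower3 (Q : Matrix (Fin 3) (Fin 3) ℝ) (hsymm : Q.IsSymm)
    (hdiag : ∀ i, Q i i = 1)
    (hcube : ∀ v : Fin 3 → ℤ, v ≠ 0 → (∀ i, v i = -1 ∨ v i = 0 ∨ v i = 1) →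
      1 ≤ intQuadForm Q v) (x : Fin 3 → ℝ)
    (h0 : 0 ≤ x 0) (h01 : x 0 ≤ x 1) (h12 : x 1 ≤ x 2) :
    (x 0)^2 + (x 1 - x 0)^2 + (x 2 - x 1)^2
      + x 0 * (x 1 - x 0) + (x 1 - x 0) * (x 2 - x 1) ≤ dotProduct x (Q.mulVec x) := by
  have hE : dotProduct x (Q.mulVec x) = x 0^2 + x 1^2 + x 2^2
      + 2*Q 0 1*x 0*x 1 + 2*Q 0 2*x 0*x 2 + 2*Q 1 2*x 1*x 2 := by
    simp only [dotProduct, Matrix.mulVec, Fin.sum_univ_three, hdiag,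
      hsymm.apply 0 1, hsymm.apply 0 2, hsymm.apply 1 2]
    ring
  have c1 : (1:ℝ) ≤ 3 + 2*(Q 0 1 + Q 0 2 + Q 1 2) := by
    have h := hcube ![1,1,1] (by intro h; simpa using congrFun h 2) (by decide)
    have e : intQuadForm Q ![1,1,1] = 3 + 2*(Q 0 1 + Q 0 2 + Q 1 2) := by
      simp only [intQuadForm, dotProduct, Matrix.mulVec, Fin.sum_univ_three, hdiag,
        hsymm.apply 0 1, hsymm.apply 0 2, hsymm.apply 1 2,
        Matrix.cons_val_zero, Matrix.cons_val_one, Matrix.head_cons,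
        Matrix.cons_val_two, Matrix.tail_cons]
      push_cast; ring
    linarith [e ▸ h]
  have c2 : (1:ℝ) ≤ 2 + 2*Q 1 2 := by
    have h := hcube ![0,1,1] (by intro h; simpa using congrFun h 2) (by decide)
    have e : intQuadForm Q ![0,1,1] = 2 + 2*Q 1 2 := by
      simp only [intQuadForm, dotProduct, Matrix.mulVec, Fin.sum_univ_three, hdiag,
        hsymm.apply 0 1, hsymm.apply 0 2, hsymm.apply 1 2,
        Matrix.cons_val_zero, Matrix.cons_val_one, Matrix.head_cons,
        Matrix.cons_val_two, Matrix.tail_cons]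
      push_cast; ring
    linarith [e ▸ h]
  have c3 : (1:ℝ) ≤ 2 + 2*Q 0 2 := by
    have h := hcube ![1,0,1] (by intro h; simpa using congrFun h 2) (by decide)
    have e : intQuadForm Q ![1,0,1] = 2 + 2*Q 0 2 := by
      simp only [intQuadForm, dotProduct, Matrix.mulVec, Fin.sum_univ_three, hdiag,
        hsymm.apply 0 1, hsymm.apply 0 2, hsymm.apply 1 2,
        Matrix.cons_val_zero, Matrix.cons_val_one, Matrix.head_cons,
        Matrix.cons_val_two, Matrix.tail_cons]
      push_cast; ring
    linarith [e ▸ h]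
  have hb : (0:ℝ) ≤ x 1 - x 0 := by linarith
  have hcc : (0:ℝ) ≤ x 2 - x 1 := by linarith
  have p0 : (0:ℝ) ≤ (x 0 * x 0) * ((3 + 2*(Q 0 1 + Q 0 2 + Q 1 2)) - 1) :=
    mul_nonneg (mul_nonneg h0 h0) (by linarith)
  have p1 : (0:ℝ) ≤ ((x 1 - x 0) * (x 1 - x 0)) * ((2 + 2*Q 1 2) - 1) :=
    mul_nonneg (mul_nonneg hb hb) (by linarith)
  have p2 : (0:ℝ) ≤ (x 0 * (x 1 - x 0)) * ((3 + 2*(Q 0 1 + Q 0 2 + Q 1 2)) - 1) :=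
    mul_nonneg (mul_nonneg h0 hb) (by linarith)
  have p3 : (0:ℝ) ≤ (x 0 * (x 1 - x 0)) * ((2 + 2*Q 1 2) - 1) :=
    mul_nonneg (mul_nonneg h0 hb) (by linarith)
  have p4 : (0:ℝ) ≤ (x 0 * (x 2 - x 1)) * ((2 + 2*Q 1 2) - 1) :=
    mul_nonneg (mul_nonneg h0 hcc) (by linarith)
  have p5 : (0:ℝ) ≤ (x 0 * (x 2 - x 1)) * ((2 + 2*Q 0 2) - 1) :=
    mul_nonneg (mul_nonneg h0 hcc) (by linarith)
  have p6 : (0:ℝ) ≤ ((x 1 - x 0) * (x 2 - x 1)) * ((2 + 2*Q 1 2) - 1) :=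
    mul_nonneg (mul_nonneg hb hcc) (by linarith)
  rw [hE]
  linarith [p0, p1, p2, p3, p4, p5, p6]

lemma int_le_sq (a : ℤ) (ha : 0 ≤ a) : a ≤ a^2 := by
  rcases ha.eq_or_lt with h | h
  · simp [← h]
  · nlinarith [mul_nonneg (by omega : (0:ℤ) ≤ a - 1) ha]

lemma base_real3 (a b c : ℝ) (ha : 0 ≤ a) (hb : 0 ≤ b) (hc : 0 ≤ c) :
    a^2 + (a+b)^2 + (a+b+c)^2 ≤ 32 * (a^2 + b^2 + c^2 + a*b + b*c) := by
  nlinarith [sq_nonneg (a-b), sq_nonneg (a-c), sq_nonneg (b-c), mul_nonneg ha hb,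
    mul_nonneg hb hc, mul_nonneg ha hc]

lemma main3 (Q : Matrix (Fin 3) (Fin 3) ℝ) (hsymm : Q.IsSymm) (hdiag : ∀ i, Q i i = 1)
    (hcube : ∀ v : Fin 3 → ℤ, v ≠ 0 → (∀ i, v i = -1 ∨ v i = 0 ∨ v i = 1) →
      1 ≤ intQuadForm Q v) :
    Q.PosDef ∧ ∀ v : Fin 3 → ℤ, v ≠ 0 → 1 ≤ intQuadForm Q v := by
  constructor
  · refine Matrix.PosDef.of_dotProduct_mulVec_pos ?_ ?_
    · ext i j
      simp only [Matrix.conjTranspose_apply, star_trivial]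
      exact hsymm.apply i j
    · intro x hx
      obtain ⟨Q', x', hS, hD, hC, hmono, hnn, hsum, heq⟩ := reduce_real Q hsymm hdiag hcube x
      have lower := quad_lower3 Q' hS hD hC x' (hnn 0)
        (hmono (show (0:Fin 3) ≤ 1 by decide)) (hmono (show (1:Fin 3) ≤ 2 by decide))
      have breal := base_real3 (x' 0) (x' 1 - x' 0) (x' 2 - x' 1) (hnn 0)
        (by have := hmono (show (0:Fin 3) ≤ 1 by decide); linarith)
        (by have := hmono (show (1:Fin 3) ≤ 2 by decide); linarith)
      have hpos : 0 < ∑ i, (x i)^2 := by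
        have hex : ∃ i, x i ≠ 0 := by
          by_contra h; push_neg at h; exact hx (funext h)
        obtain ⟨i, hi⟩ := hex
        exact Finset.sum_pos' (fun j _ => sq_nonneg _) ⟨i, Finset.mem_univ i, by positivity⟩
      have : 0 < dotProduct x (Q.mulVec x) := by
        rw [← heq]
        rw [Fin.sum_univ_three, Fin.sum_univ_three] at hsum
        rw [Fin.sum_univ_three] at hpos
        nlinarith [lower, breal, hpos, hsum]
      simpa [star_trivial] using this
  · intro v hv
    obtain ⟨Q', v', hS, hD, hC, hmono, hnn, hne, heq⟩ := reduce_int Q hsymm hdiag hcube v hv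
    have h01 : v' 0 ≤ v' 1 := hmono (show (0:Fin 3) ≤ 1 by decide)
    have h12 : v' 1 ≤ v' 2 := hmono (show (1:Fin 3) ≤ 2 by decide)
    have h2 : 1 ≤ v' 2 := by
      have hex : ∃ k, v' k ≠ 0 := by
        by_contra h; push_neg at h; exact hne (funext h)
      obtain ⟨k, hk⟩ := hex
      have hk2 : v' k ≤ v' 2 := hmono (show k ≤ 2 by omega)
      have := hnn k
      omega
    have lower := quad_lower3 Q' hS hD hC (fun i => (v' i : ℝ))
      (by show (0:ℝ) ≤ (v' 0 : ℝ); exact_mod_cast hnn 0)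
      (by show (v' 0 : ℝ) ≤ (v' 1 : ℝ); exact_mod_cast h01)
      (by show (v' 1 : ℝ) ≤ (v' 2 : ℝ); exact_mod_cast h12)
    have bint : (1:ℤ) ≤ (v' 0)^2 + (v' 1 - v' 0)^2 + (v' 2 - v' 1)^2
        + v' 0 * (v' 1 - v' 0) + (v' 1 - v' 0) * (v' 2 - v' 1) := by
      have s1 := int_le_sq (v' 0) (hnn 0)
      have s2 := int_le_sq (v' 1 - v' 0) (by omega)
      have s3 := int_le_sq (v' 2 - v' 1) (by omega)
      have m1 : 0 ≤ v' 0 * (v' 1 - v' 0) := mul_nonneg (hnn 0) (by omega)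
      have m2 : 0 ≤ (v' 1 - v' 0) * (v' 2 - v' 1) := mul_nonneg (by omega) (by omega)
      nlinarith [s1, s2, s3, m1, m2]
    rw [← heq]
    show (1:ℝ) ≤ dotProduct (fun i => ((v' i : ℤ) : ℝ)) (Q'.mulVec fun i => ((v' i : ℤ) : ℝ))
    have bcast : (1:ℝ) ≤ ((v' 0 : ℝ))^2 + ((v' 1 : ℝ) - (v' 0 : ℝ))^2
        + ((v' 2 : ℝ) - (v' 1 : ℝ))^2
        + (v' 0 : ℝ) * ((v' 1 : ℝ) - (v' 0 : ℝ))
        + ((v' 1 : ℝ) - (v' 0 : ℝ)) * ((v' 2 : ℝ) - (v' 1 : ℝ)) := by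
      exact_mod_cast bint
    linarith [lower, bcast]
lemma quad_lower2 (Q : Matrix (Fin 2) (Fin 2) ℝ) (hsymm : Q.IsSymm)
    (hdiag : ∀ i, Q i i = 1)
    (hcube : ∀ v : Fin 2 → ℤ, v ≠ 0 → (∀ i, v i = -1 ∨ v i = 0 ∨ v i = 1) →
      1 ≤ intQuadForm Q v) (x : Fin 2 → ℝ)
    (h0 : 0 ≤ x 0) (h01 : x 0 ≤ x 1) :
    (x 0)^2 + (x 1 - x 0)^2 + x 0 * (x 1 - x 0) ≤ dotProduct x (Q.mulVec x) := by
  have hE : dotProduct x (Q.mulVec x) = x 0^2 + x 1^2 + 2*Q 0 1*x 0*x 1 := by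
    simp only [dotProduct, Matrix.mulVec, Fin.sum_univ_two, hdiag, hsymm.apply 0 1]
    ring
  have c1 : (1:ℝ) ≤ 2 + 2*Q 0 1 := by
    have h := hcube ![1,1] (by intro h; simpa using congrFun h 1) (by decide)
    have e : intQuadForm Q ![1,1] = 2 + 2*Q 0 1 := by
      simp only [intQuadForm, dotProduct, Matrix.mulVec, Fin.sum_univ_two, hdiag,
        hsymm.apply 0 1, Matrix.cons_val_zero, Matrix.cons_val_one, Matrix.head_cons]
      push_cast; ring
    linarith [e ▸ h]
  have hb : (0:ℝ) ≤ x 1 - x 0 := by linarith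
  have p0 : (0:ℝ) ≤ (x 0 * x 0) * ((2 + 2*Q 0 1) - 1) :=
    mul_nonneg (mul_nonneg h0 h0) (by linarith)
  have p1 : (0:ℝ) ≤ (x 0 * (x 1 - x 0)) * ((2 + 2*Q 0 1) - 1) :=
    mul_nonneg (mul_nonneg h0 hb) (by linarith)
  rw [hE]
  linarith [p0, p1]

lemma main2 (Q : Matrix (Fin 2) (Fin 2) ℝ) (hsymm : Q.IsSymm) (hdiag : ∀ i, Q i i = 1)
    (hcube : ∀ v : Fin 2 → ℤ, v ≠ 0 → (∀ i, v i = -1 ∨ v i = 0 ∨ v i = 1) →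
      1 ≤ intQuadForm Q v) :
    Q.PosDef ∧ ∀ v : Fin 2 → ℤ, v ≠ 0 → 1 ≤ intQuadForm Q v := by
  constructor
  · refine Matrix.PosDef.of_dotProduct_mulVec_pos ?_ ?_
    · ext i j
      simp only [Matrix.conjTranspose_apply, star_trivial]
      exact hsymm.apply i j
    · intro x hx
      obtain ⟨Q', x', hS, hD, hC, hmono, hnn, hsum, heq⟩ := reduce_real Q hsymm hdiag hcube x
      have lower := quad_lower2 Q' hS hD hC x' (hnn 0)
        (hmono (show (0:Fin 2) ≤ 1 by decide))
      have hpos : 0 < ∑ i, (x i)^2 := by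
        have hex : ∃ i, x i ≠ 0 := by
          by_contra h; push_neg at h; exact hx (funext h)
        obtain ⟨i, hi⟩ := hex
        exact Finset.sum_pos' (fun j _ => sq_nonneg _) ⟨i, Finset.mem_univ i, by positivity⟩
      have : 0 < dotProduct x (Q.mulVec x) := by
        rw [← heq]
        rw [Fin.sum_univ_two, Fin.sum_univ_two] at hsum
        rw [Fin.sum_univ_two] at hpos
        nlinarith [lower, hpos, hsum, mul_nonneg (hnn 0) (show (0:ℝ) ≤ x' 1 - x' 0 by
          have := hmono (show (0:Fin 2) ≤ 1 by decide); linarith)]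
      simpa [star_trivial] using this
  · intro v hv
    obtain ⟨Q', v', hS, hD, hC, hmono, hnn, hne, heq⟩ := reduce_int Q hsymm hdiag hcube v hv
    have h01 : v' 0 ≤ v' 1 := hmono (show (0:Fin 2) ≤ 1 by decide)
    have h1 : 1 ≤ v' 1 := by
      have hex : ∃ k, v' k ≠ 0 := by
        by_contra h; push_neg at h; exact hne (funext h)
      obtain ⟨k, hk⟩ := hex
      have hk1 : v' k ≤ v' 1 := hmono (show k ≤ 1 by omega)
      have := hnn k
      omega
    have lower := quad_lower2 Q' hS hD hC (fun i => (v' i : ℝ))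
      (by show (0:ℝ) ≤ (v' 0 : ℝ); exact_mod_cast hnn 0)
      (by show (v' 0 : ℝ) ≤ (v' 1 : ℝ); exact_mod_cast h01)
    have bint : (1:ℤ) ≤ (v' 0)^2 + (v' 1 - v' 0)^2 + v' 0 * (v' 1 - v' 0) := by
      have s1 := int_le_sq (v' 0) (hnn 0)
      have s2 := int_le_sq (v' 1 - v' 0) (by omega)
      have m1 : 0 ≤ v' 0 * (v' 1 - v' 0) := mul_nonneg (hnn 0) (by omega)
      nlinarith [s1, s2, m1]
    rw [← heq]
    show (1:ℝ) ≤ dotProduct (fun i => ((v' i : ℤ) : ℝ)) (Q'.mulVec fun i => ((v' i : ℤ) : ℝ))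
    have bcast : (1:ℝ) ≤ ((v' 0 : ℝ))^2 + ((v' 1 : ℝ) - (v' 0 : ℝ))^2
        + (v' 0 : ℝ) * ((v' 1 : ℝ) - (v' 0 : ℝ)) := by
      exact_mod_cast bint
    linarith [lower, bcast]

lemma main1 (Q : Matrix (Fin 1) (Fin 1) ℝ) (hsymm : Q.IsSymm) (hdiag : ∀ i, Q i i = 1) :
    Q.PosDef ∧ ∀ v : Fin 1 → ℤ, v ≠ 0 → 1 ≤ intQuadForm Q v := by
  have hE : ∀ y : Fin 1 → ℝ, dotProduct y (Q.mulVec y) = y 0 ^ 2 := by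
    intro y
    simp only [dotProduct, Matrix.mulVec, Fin.sum_univ_one, hdiag]
    ring
  constructor
  · refine Matrix.PosDef.of_dotProduct_mulVec_pos ?_ ?_
    · ext i j
      simp only [Matrix.conjTranspose_apply, star_trivial]
      exact hsymm.apply i j
    · intro x hx
      have : x 0 ≠ 0 := by
        intro h
        apply hx
        funext i
        have : i = 0 := by omega
        rw [this]; exact h
      have h2 := hE x
      simp only [star_trivial]
      rw [h2]
      positivity
  · intro v hv
    have h0 : v 0 ≠ 0 := by
      intro h
      apply hv
      funext i
      have : i = 0 := by omega
      rw [this]; exact h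
    have h1 : 1 ≤ (v 0)^2 := by rcases h0.lt_or_gt with h | h <;> nlinarith
    show (1:ℝ) ≤ dotProduct (fun i => ((v i : ℤ) : ℝ)) (Q.mulVec fun i => ((v i : ℤ) : ℝ))
    rw [hE]
    show (1:ℝ) ≤ ((v 0 : ℤ) : ℝ)^2
    exact_mod_cast h1

/-- For `n ≤ 4`: if a symmetric matrix `Q` with unit diagonal satisfies `v Q vᵀ ≥ 1` for
every nonzero integer vector with entries in `{−1, 0, 1}`, then `Q` is positive definite
and `v Q vᵀ ≥ 1` for every nonzero integer vector; hence (for `n ≤ 4`) the set `Ω₂` is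
cut out by this finite system of linear conditions. -/
theorem stmt17 (n : ℕ) (hn : n ≤ 4) (Q : Matrix (Fin n) (Fin n) ℝ)
    (hsymm : Q.IsSymm) (hdiag : ∀ i, Q i i = 1)
    (hcube : ∀ v : Fin n → ℤ, v ≠ 0 → (∀ i, v i = -1 ∨ v i = 0 ∨ v i = 1) →
      1 ≤ intQuadForm Q v) :
    Q.PosDef ∧ ∀ v : Fin n → ℤ, v ≠ 0 → 1 ≤ intQuadForm Q v := by
  interval_cases n
  · refine ⟨Matrix.PosDef.of_dotProduct_mulVec_pos (by ext i j; exact i.elim0) (fun x hx => absurd (funext fun i => i.elim0) hx), ?_⟩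
    intro v hv
    exact absurd (funext fun i => i.elim0) hv
  · exact main1 Q hsymm hdiag
  · exact main2 Q hsymm hdiag hcube
  · exact main3 Q hsymm hdiag hcube
  · exact main4 Q hsymm hdiag hcube
end

section
/- Let n ≤ 4 and let Q be an extreme point of Ω₂. Then there exist at least n(n+1)/2 vectors v ∈ ℤⁿ with v Q vᵀ = 1 that are pairwise non-proportional (no two equal up to sign); i.e., the lattice with Gram matrix Q has at least n(n+1)/2 shortest vectors counted up to ±1. -/
open Matrix

/-- The set `Ω₂` of symmetric positive definite matrices with unit diagonal whose
associated quadratic form is `≥ 1` on all nonzero integer vectors. -/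
def Omega2 (n : ℕ) : Set (Matrix (Fin n) (Fin n) ℝ) :=
  {Q | Q.IsSymm ∧ Q.PosDef ∧ (∀ i, Q i i = 1) ∧
    ∀ v : Fin n → ℤ, v ≠ 0 → 1 ≤ intQuadForm Q v}


namespace Stmt18Aux

variable {n : ℕ}

/-- quadratic form as a double sum -/
def qf (A : Matrix (Fin n) (Fin n) ℝ) (x : Fin n → ℝ) : ℝ :=
  ∑ i, ∑ j, x i * A i j * x j

lemma qf_eq_dot (A : Matrix (Fin n) (Fin n) ℝ) (x : Fin n → ℝ) :
    dotProduct x (A.mulVec x) = qf A x := by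
  simp [qf, dotProduct, Matrix.mulVec, Finset.mul_sum, mul_assoc]

lemma qf_add (A B : Matrix (Fin n) (Fin n) ℝ) (x : Fin n → ℝ) :
    qf (A + B) x = qf A x + qf B x := by
  simp [qf, Matrix.add_apply, mul_add, add_mul, Finset.sum_add_distrib]

lemma qf_smul (t : ℝ) (A : Matrix (Fin n) (Fin n) ℝ) (x : Fin n → ℝ) :
    qf (t • A) x = t * qf A x := by
  simp only [qf, Finset.mul_sum]
  refine Finset.sum_congr rfl fun i _ => Finset.sum_congr rfl fun j _ => ?_
  simp only [Matrix.smul_apply, smul_eq_mul]; ring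

lemma qf_sq_smul (A : Matrix (Fin n) (Fin n) ℝ) (a : ℝ) (x : Fin n → ℝ) :
    qf A (a • x) = a ^ 2 * qf A x := by
  simp only [qf, Finset.mul_sum]
  refine Finset.sum_congr rfl fun i _ => Finset.sum_congr rfl fun j _ => ?_
  simp only [Pi.smul_apply, smul_eq_mul]; ring

lemma abs_qf_le (A : Matrix (Fin n) (Fin n) ℝ) (x : Fin n → ℝ) :
    |qf A x| ≤ (∑ i, ∑ j, |A i j|) * ‖x‖ ^ 2 := by
  have h1 : ∀ i j : Fin n, |x i * A i j * x j| ≤ |A i j| * ‖x‖ ^ 2 := by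
    intro i j
    have hi : |x i| ≤ ‖x‖ := by simpa [Real.norm_eq_abs] using norm_le_pi_norm x i
    have hj : |x j| ≤ ‖x‖ := by simpa [Real.norm_eq_abs] using norm_le_pi_norm x j
    have : |x i * A i j * x j| = |x i| * |A i j| * |x j| := by rw [abs_mul, abs_mul]
    rw [this, sq]
    have hmul : |x i| * |x j| ≤ ‖x‖ * ‖x‖ :=
      mul_le_mul hi hj (abs_nonneg _) (norm_nonneg _)
    nlinarith [abs_nonneg (A i j), hmul]
  calc |qf A x| ≤ ∑ i, ∑ j, |x i * A i j * x j| := by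
        refine (Finset.abs_sum_le_sum_abs _ _).trans ?_
        exact Finset.sum_le_sum fun i _ => Finset.abs_sum_le_sum_abs _ _
    _ ≤ ∑ i, ∑ j, |A i j| * ‖x‖ ^ 2 :=
        Finset.sum_le_sum fun i _ => Finset.sum_le_sum fun j _ => h1 i j
    _ = (∑ i, ∑ j, |A i j|) * ‖x‖ ^ 2 := by
        rw [Finset.sum_mul]
        exact Finset.sum_congr rfl fun i _ => (Finset.sum_mul _ _ _).symm

lemma posdef_bound [Nonempty (Fin n)] {A : Matrix (Fin n) (Fin n) ℝ} (hA : A.PosDef) :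
    ∃ c > 0, ∀ x : Fin n → ℝ, c * ‖x‖ ^ 2 ≤ qf A x := by
  have hpos : ∀ x : Fin n → ℝ, x ≠ 0 → 0 < qf A x := by
    intro x hx
    have := hA.dotProduct_mulVec_pos hx
    rwa [star_trivial, qf_eq_dot] at this
  have hco : IsCompact (Metric.sphere (0 : Fin n → ℝ) 1) := isCompact_sphere _ _
  have hne : (Metric.sphere (0 : Fin n → ℝ) 1).Nonempty := by
    refine ⟨fun _ => 1, ?_⟩
    simp [mem_sphere_iff_norm, pi_norm_const]
  have hcont : ContinuousOn (qf A) (Metric.sphere 0 1) := by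
    refine Continuous.continuousOn ?_
    exact continuous_finset_sum _ fun i _ => continuous_finset_sum _ fun j _ =>
      ((continuous_apply i).mul continuous_const).mul (continuous_apply j)
  obtain ⟨x₀, hx₀s, hx₀min⟩ := hco.exists_isMinOn hne hcont
  have hx₀ : x₀ ≠ 0 := by
    intro h
    rw [h, Metric.mem_sphere, dist_self] at hx₀s
    norm_num at hx₀s
  refine ⟨qf A x₀, hpos _ hx₀, fun x => ?_⟩
  rcases eq_or_ne x 0 with rfl | hx
  · simp [qf]
  · have hxn : 0 < ‖x‖ := norm_pos_iff.mpr hx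
    set u : Fin n → ℝ := ‖x‖⁻¹ • x with hu
    have hus : u ∈ Metric.sphere (0 : Fin n → ℝ) 1 := by
      rw [mem_sphere_zero_iff_norm, hu, norm_smul, norm_inv, norm_norm,
        inv_mul_cancel₀ hxn.ne']
    have h1 : qf A x = ‖x‖ ^ 2 * qf A u := by
      have hxu : x = ‖x‖ • u := by
        rw [hu, smul_smul, mul_inv_cancel₀ hxn.ne', one_smul]
      conv_lhs => rw [hxu]
      rw [qf_sq_smul]
    have h2 : qf A x₀ ≤ qf A u := hx₀min hus
    rw [h1]
    have := sq_nonneg ‖x‖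
    nlinarith





lemma exists_pos_forall {α : Type*} (s : Finset α) (f g : α → ℝ)
    (hf : ∀ a ∈ s, 0 ≤ f a) (hg : ∀ a ∈ s, 0 < g a) :
    ∃ t > 0, ∀ a ∈ s, t * f a ≤ g a := by
  classical
  induction s using Finset.induction_on with
  | empty => exact ⟨1, one_pos, by simp⟩
  | insert a s ha ih =>
    obtain ⟨t, ht, hts⟩ := ih (fun b hb => hf b (Finset.mem_insert_of_mem hb))
      (fun b hb => hg b (Finset.mem_insert_of_mem hb))
    have hga : 0 < g a := hg a (Finset.mem_insert_self a s)
    have hfa : 0 ≤ f a := hf a (Finset.mem_insert_self a s)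
    refine ⟨min t (g a / (f a + 1)), lt_min ht (by positivity), ?_⟩
    intro b hb
    rcases Finset.mem_insert.mp hb with rfl | hb'
    · have h1 : min t (g b / (f b + 1)) * f b ≤ g b / (f b + 1) * f b :=
        mul_le_mul_of_nonneg_right (min_le_right _ _) hfa
      refine h1.trans ?_
      rw [div_mul_eq_mul_div, div_le_iff₀ (by positivity)]
      nlinarith
    · have h1 : min t (g a / (f a + 1)) * f b ≤ t * f b :=
        mul_le_mul_of_nonneg_right (min_le_left _ _) (hf b hb)
      exact h1.trans (hts b hb')

lemma finite_box {n : ℕ} (B : ℤ) : {v : Fin n → ℤ | ∀ i, |v i| ≤ B}.Finite := by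
  have hsub : {v : Fin n → ℤ | ∀ i, |v i| ≤ B} ⊆
      Set.pi Set.univ (fun _ : Fin n => Set.Icc (-B) B) := by
    intro v hv i _
    exact Set.mem_Icc.mpr (abs_le.mp (hv i))
  exact (Set.Finite.pi fun _ => Set.finite_Icc _ _).subset hsub

lemma exists_orth {ι : Type*} [Fintype ι] {W S : Submodule ℝ (ι → ℝ)} (hWS : W < S) :
    ∃ d : ι → ℝ, d ∈ S ∧ d ≠ 0 ∧ ∀ w ∈ W, ∑ p, d p * w p = 0 := by
  classical
  let L : EuclideanSpace ℝ ι ≃ₗ[ℝ] (ι → ℝ) := WithLp.linearEquiv 2 ℝ (ι → ℝ)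
  let W' : Submodule ℝ (EuclideanSpace ℝ ι) := W.comap L.toLinearMap
  let S' : Submodule ℝ (EuclideanSpace ℝ ι) := S.comap L.toLinearMap
  have hmapW : Submodule.map L.toLinearMap W' = W :=
    Submodule.map_comap_eq_of_surjective L.surjective _
  have hmapS : Submodule.map L.toLinearMap S' = S :=
    Submodule.map_comap_eq_of_surjective L.surjective _
  have hlt : W' < S' := by
    refine lt_of_le_of_ne (Submodule.comap_mono hWS.le) ?_
    intro h
    apply hWS.ne
    rw [← hmapW, ← hmapS, h]
  obtain ⟨s, hsS, hsW⟩ := SetLike.exists_of_lt hlt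
  set d' : EuclideanSpace ℝ ι := s - (Submodule.orthogonalProjection W' s : EuclideanSpace ℝ ι) with hd'
  have hdW : d' ∈ W'ᗮ := W'.sub_starProjection_mem_orthogonal s
  have hdS : d' ∈ S' :=
    Submodule.sub_mem _ hsS (hlt.le (SetLike.coe_mem (Submodule.orthogonalProjection W' s)))
  have hdne : d' ≠ 0 := by
    rw [hd', sub_ne_zero]
    intro h
    exact hsW (h ▸ SetLike.coe_mem (Submodule.orthogonalProjection W' s))
  refine ⟨L d', Submodule.mem_comap.mp hdS, ?_, ?_⟩
  · intro h
    exact hdne (by simpa using congrArg L.symm h)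
  · intro w hw
    have hw' : L.symm w ∈ W' := by
      rw [Submodule.mem_comap]
      simpa using hw
    have h0 : (inner ℝ (L.symm w) d' : ℝ) = 0 :=
      (Submodule.mem_orthogonal W' d').mp hdW _ hw'
    rw [PiLp.inner_apply] at h0
    simp only [RCLike.inner_apply, conj_trivial] at h0
    rw [← h0]
    refine Finset.sum_congr rfl fun p _ => ?_
    have h1 : (L d') p = d' p := rfl
    have h2 : (L.symm w) p = w p := rfl
    rw [h1, h2, mul_comm]







/-- basis candidates for the space of symmetric zero-diagonal "matrices" as functions on pairs -/
def psi (e : {p : Fin n × Fin n // p.1 < p.2}) : (Fin n × Fin n) → ℝ :=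
  fun q => if q = e.val ∨ q = (e.val.2, e.val.1) then 1 else 0

/-- off-diagonal products of coordinates of an integer vector -/
def phi (v : Fin n → ℤ) : (Fin n × Fin n) → ℝ :=
  fun p => if p.1 = p.2 then 0 else (v p.1 : ℝ) * (v p.2 : ℝ)

lemma psi_li : LinearIndependent ℝ (psi (n := n)) := by
  rw [Fintype.linearIndependent_iff]
  intro c hc e
  have h := congrFun hc e.val
  rw [Finset.sum_apply] at h
  simp only [Pi.smul_apply, smul_eq_mul, Pi.zero_apply] at h
  rw [Finset.sum_eq_single e] at h
  · simpa [psi] using h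
  · intro f _ hfe
    have h1 : ¬(e.val = f.val ∨ e.val = (f.val.2, f.val.1)) := by
      rintro (h' | h')
      · exact hfe (Subtype.ext h'.symm)
      · have h2 := e.prop
        rw [h'] at h2
        exact absurd f.prop (by simpa using lt_asymm h2)
    simp [psi, h1]
  · simp

lemma phi_repr (v : Fin n → ℤ) :
    phi v = ∑ e : {p : Fin n × Fin n // p.1 < p.2},
      ((v e.val.1 : ℝ) * (v e.val.2 : ℝ)) • psi e := by
  funext p
  rw [Finset.sum_apply]
  simp only [Pi.smul_apply, smul_eq_mul]
  rcases lt_trichotomy p.1 p.2 with hlt | heq | hgt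
  · rw [Finset.sum_eq_single ⟨p, hlt⟩]
    · simp [psi, phi, hlt.ne]
    · intro f _ hfe
      have h1 : ¬(p = f.val ∨ p = (f.val.2, f.val.1)) := by
        rintro (h' | h')
        · exact hfe (Subtype.ext h'.symm)
        · rw [h'] at hlt
          exact absurd f.prop (by simpa using lt_asymm hlt)
      simp [psi, h1]
    · simp
  · have hz : phi v p = 0 := by simp [phi, heq]
    rw [hz]
    refine (Finset.sum_eq_zero fun f _ => ?_).symm
    have h1 : ¬(p = f.val ∨ p = (f.val.2, f.val.1)) := by
      rintro (h' | h')
      · exact absurd (h' ▸ f.prop) (by simp [heq])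
      · have := f.prop
        rw [h'] at heq
        simp at heq
        exact absurd this (by simp [heq])
    simp [psi, h1]
  · have hpair : ((p.2, p.1) : Fin n × Fin n).1 < ((p.2, p.1) : Fin n × Fin n).2 := hgt
    rw [Finset.sum_eq_single ⟨(p.2, p.1), hpair⟩]
    · have hc : p = ((p.2, p.1).2, (p.2, p.1).1) := by simp
      simp only [psi, phi]
      rw [if_neg hgt.ne', if_pos (Or.inr trivial)]
      ring
    · intro f _ hfe
      have h1 : ¬(p = f.val ∨ p = (f.val.2, f.val.1)) := by
        rintro (h' | h')
        · rw [h'] at hgt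
          exact absurd f.prop (by simpa using lt_asymm hgt)
        · apply hfe
          apply Subtype.ext
          have h2 : p.1 = f.val.2 ∧ p.2 = f.val.1 := by
            constructor <;> simp [h']
          have : f.val = (p.2, p.1) := by
            ext <;> simp [h2.1.symm, h2.2.symm]
          simp [this]
      simp [psi, h1]
    · simp

lemma phi_mem_span (v : Fin n → ℤ) :
    phi v ∈ Submodule.span ℝ (Set.range (psi (n := n))) := by
  rw [phi_repr v]
  exact Submodule.sum_mem _ fun e _ =>
    Submodule.smul_mem _ _ (Submodule.subset_span ⟨e, rfl⟩)

lemma mem_span_psi_props {x : (Fin n × Fin n) → ℝ}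
    (hx : x ∈ Submodule.span ℝ (Set.range (psi (n := n)))) :
    (∀ i j, x (i, j) = x (j, i)) ∧ ∀ i, x (i, i) = 0 := by
  induction hx using Submodule.span_induction with
  | mem y hy =>
    obtain ⟨e, rfl⟩ := hy
    constructor
    · intro i j
      have hiff : ((i, j) = e.val ∨ (i, j) = (e.val.2, e.val.1)) ↔
          ((j, i) = e.val ∨ (j, i) = (e.val.2, e.val.1)) := by
        constructor <;> rintro (h | h) <;> simp [Prod.ext_iff] at h ⊢ <;> tauto
      simp only [psi]
      rw [if_congr hiff rfl rfl]
    · intro i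
      have h1 : ¬((i, i) = e.val ∨ (i, i) = (e.val.2, e.val.1)) := by
        rintro (h' | h')
        · exact absurd (h' ▸ e.prop) (by simp)
        · have : i = e.val.2 ∧ i = e.val.1 := by simp [Prod.ext_iff] at h'; tauto
          exact absurd e.prop (by rw [← this.1, ← this.2]; simp)
      simp only [psi]
      exact if_neg h1
  | zero => simp
  | add x y hx hy ihx ihy =>
    exact ⟨fun i j => by simp [ihx.1 i j, ihy.1 i j],
      fun i => by simp [ihx.2 i, ihy.2 i]⟩
  | smul a x hx ih =>
    exact ⟨fun i j => by simp [ih.1 i j], fun i => by simp [ih.2 i]⟩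








def bvec (i : Fin n) : Fin n → ℤ := fun k => if k = i then 1 else 0

lemma bvec_ne_zero (i : Fin n) : bvec i ≠ 0 := by
  intro h
  have := congrFun h i
  simp [bvec] at this

lemma phi_bvec (i : Fin n) : phi (bvec i) = 0 := by
  funext p
  rcases eq_or_ne p.1 p.2 with h | h
  · simp [phi, h]
  · rcases eq_or_ne p.1 i with h1 | h1
    · have h2 : p.2 ≠ i := fun hc => h (h1.trans hc.symm)
      simp [phi, h, bvec, h2]
    · simp [phi, h, bvec, h1]

lemma phi_neg (v : Fin n → ℤ) : phi (-v) = phi v := by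
  funext p
  simp [phi]

lemma intQuadForm_eq_qf (Q : Matrix (Fin n) (Fin n) ℝ) (v : Fin n → ℤ) :
    intQuadForm Q v = qf Q (fun i => (v i : ℝ)) := by
  have h : dotProduct (fun i => ((v i : ℝ))) (Q.mulVec fun i => (v i : ℝ))
      = qf Q (fun i => (v i : ℝ)) := by
    simp [qf, dotProduct, Matrix.mulVec, Finset.mul_sum, mul_assoc]
  exact h

lemma intQuadForm_bvec (Q : Matrix (Fin n) (Fin n) ℝ) (i : Fin n) :
    intQuadForm Q (bvec i) = Q i i := by
  rw [intQuadForm_eq_qf, qf]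
  have hcast : ∀ k, ((bvec i k : ℤ) : ℝ) = if k = i then 1 else 0 := by
    intro k; simp [bvec, apply_ite (fun z : ℤ => (z : ℝ))]
  simp only [hcast]
  rw [Finset.sum_eq_single i]
  · rw [Finset.sum_eq_single i]
    · simp
    · intro b _ hb
      simp [hb]
    · simp
  · intro k _ hk
    refine Finset.sum_eq_zero fun j _ => by simp [hk]
  · simp

lemma pairing (d : (Fin n × Fin n) → ℝ) (hdiag : ∀ i, d (i, i) = 0) (v : Fin n → ℤ) :
    qf (Matrix.of fun i j => d (i, j)) (fun i => (v i : ℝ)) = ∑ p, d p * phi v p := by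
  rw [qf, Fintype.sum_prod_type]
  refine Finset.sum_congr rfl fun i _ => Finset.sum_congr rfl fun j _ => ?_
  rcases eq_or_ne i j with rfl | hij
  · simp [phi, hdiag i]
  · simp only [phi, Matrix.of_apply, if_neg hij]
    ring

lemma int_abs_le_sq (k : ℤ) : |k| ≤ k ^ 2 := by
  rcases eq_or_ne k 0 with rfl | h
  · simp
  · have h1 : 1 ≤ |k| := Int.one_le_abs (by omega)
    calc |k| = |k| * 1 := (mul_one _).symm
      _ ≤ |k| * |k| := by nlinarith
      _ = k ^ 2 := by rw [← abs_mul, abs_mul_self, sq]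


end Stmt18Aux



open Stmt18Aux

/-- For `n ≤ 4`, every extreme point `Q` of `Ω₂` admits at least `n(n+1)/2` integer
vectors with `v Q vᵀ = 1` that are pairwise distinct even up to sign. -/
theorem stmt18 (n : ℕ) (hn : n ≤ 4) (Q : Matrix (Fin n) (Fin n) ℝ)
    (hQ : Q ∈ Set.extremePoints ℝ (Omega2 n)) :
    ∃ v : Fin (n * (n + 1) / 2) → (Fin n → ℤ),
      (∀ j, v j ≠ 0 ∧ intQuadForm Q (v j) = 1) ∧
      ∀ j l, j ≠ l → v j ≠ v l ∧ v j ≠ -v l := by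
  classical
  rcases Nat.eq_zero_or_pos n with rfl | hn1
  · exact ⟨fun j => j.elim0, fun j => j.elim0, fun j _ _ => j.elim0⟩
  haveI : Nonempty (Fin n) := ⟨⟨0, hn1⟩⟩
  have harith : n + Fintype.card {p : Fin n × Fin n // p.1 < p.2} = n * (n + 1) / 2 := by
    interval_cases n <;> decide
  obtain ⟨hQmem, hQext⟩ := hQ
  obtain ⟨hQsym, hQpos, hQdiag, hQint⟩ := hQmem
  set M : Set (Fin n → ℤ) := {v | v ≠ 0 ∧ intQuadForm Q v = 1} with hM
  have hWle : Submodule.span ℝ (phi '' M) ≤ Submodule.span ℝ (Set.range (psi (n := n))) := by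
    rw [Submodule.span_le]
    rintro _ ⟨v, _, rfl⟩
    exact phi_mem_span v
  rcases hWle.lt_or_eq with hlt | heq
  · -- Case B : a perturbation exists, contradicting extremality
    exfalso
    obtain ⟨d, hdS, hdne, hdorth⟩ := exists_orth hlt
    have hdprops := mem_span_psi_props hdS
    set D : Matrix (Fin n) (Fin n) ℝ := Matrix.of fun i j => d (i, j) with hD
    have hDsym : D.IsSymm := Matrix.IsSymm.ext fun i j => hdprops.1 j i
    have hDdiag : ∀ i, D i i = 0 := fun i => hdprops.2 i
    have hDne : D ≠ 0 := by
      intro h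
      apply hdne
      funext p
      have h2 := congrFun (congrFun h p.1) p.2
      simpa [hD] using h2
    obtain ⟨c, hc, hcq⟩ := posdef_bound hQpos
    set K : ℝ := ∑ i, ∑ j, |D i j| with hK
    have hK0 : 0 ≤ K :=
      Finset.sum_nonneg fun i _ => Finset.sum_nonneg fun j _ => abs_nonneg _
    have hDM : ∀ v ∈ M, qf D (fun i => (v i : ℝ)) = 0 := by
      intro v hv
      rw [hD, pairing d hdprops.2 v]
      exact hdorth _ (Submodule.subset_span ⟨v, hv, rfl⟩)
    set F : Set (Fin n → ℤ) :=
      {v | v ≠ 0 ∧ intQuadForm Q v ≠ 1 ∧ c * ‖(fun i => (v i : ℝ))‖ ^ 2 < 2} with hF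
    have hFfin : F.Finite := by
      refine (finite_box ⌈(2 : ℝ) / c⌉).subset ?_
      intro v hv i
      have h1 : |(v i : ℝ)| ≤ ‖(fun i => (v i : ℝ))‖ := by
        simpa [Real.norm_eq_abs] using norm_le_pi_norm (fun i => (v i : ℝ)) i
      have h2 : ‖(fun i => (v i : ℝ))‖ ^ 2 < 2 / c := by
        rw [lt_div_iff₀ hc]
        have := hv.2.2
        nlinarith
      have h3 : (|v i| : ℝ) ≤ (v i : ℝ) ^ 2 := by exact_mod_cast int_abs_le_sq (v i)
      have h4 : (v i : ℝ) ^ 2 ≤ ‖(fun i => (v i : ℝ))‖ ^ 2 := by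
        rw [← sq_abs ((v i : ℝ))]
        exact pow_le_pow_left₀ (abs_nonneg _) h1 2
      have h5 : (|v i| : ℝ) ≤ (⌈(2 : ℝ) / c⌉ : ℝ) := by
        have := Int.le_ceil ((2 : ℝ) / c)
        push_cast
        push_cast at h3
        linarith
      exact_mod_cast h5
    obtain ⟨t₂, ht₂, ht₂F⟩ := exists_pos_forall hFfin.toFinset
        (fun v => |qf D (fun i => (v i : ℝ))|) (fun v => intQuadForm Q v - 1)
        (fun a _ => abs_nonneg _)
        (by
          intro a ha
          rw [Set.Finite.mem_toFinset] at ha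
          have := hQint a ha.1
          have hne1 := ha.2.1
          have h2 : 1 < intQuadForm Q a := lt_of_le_of_ne this (Ne.symm hne1)
          show (0:ℝ) < intQuadForm Q a - 1
          linarith)
    set t : ℝ := min (c / (2 * (K + 1))) t₂ with ht
    have ht0 : 0 < t := lt_min (by positivity) ht₂
    have htK : t * K ≤ c / 2 := by
      have h1 : t ≤ c / (2 * (K + 1)) := min_le_left _ _
      have h2 : c / (2 * (K + 1)) * K ≤ c / 2 := by
        rw [div_mul_eq_mul_div, div_le_div_iff₀ (by positivity) (by norm_num)]
        nlinarith
      calc t * K ≤ c / (2 * (K + 1)) * K := mul_le_mul_of_nonneg_right h1 hK0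
        _ ≤ c / 2 := h2
    have hmem : ∀ s : ℝ, |s| ≤ t → (Q + s • D) ∈ Omega2 n := by
      intro s hs
      have hsK : ∀ x : Fin n → ℝ, |s * qf D x| ≤ c / 2 * ‖x‖ ^ 2 := by
        intro x
        rw [abs_mul]
        have h1 := abs_qf_le D x
        have h2 : |s| * |qf D x| ≤ t * (K * ‖x‖ ^ 2) := by
          have h1' : |qf D x| ≤ K * ‖x‖ ^ 2 := by rw [hK]; exact h1
          exact mul_le_mul hs h1' (abs_nonneg _) ht0.le
        have h3 : t * (K * ‖x‖ ^ 2) ≤ c / 2 * ‖x‖ ^ 2 := by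
          have := sq_nonneg ‖x‖
          nlinarith
        linarith
      refine ⟨?_, ?_, ?_, ?_⟩
      · show (Q + s • D)ᵀ = Q + s • D
        rw [Matrix.transpose_add, Matrix.transpose_smul, hQsym.eq, hDsym.eq]
      · refine Matrix.PosDef.of_dotProduct_mulVec_pos ?_ ?_
        · show (Q + s • D)ᴴ = Q + s • D
          rw [Matrix.conjTranspose_eq_transpose_of_trivial, Matrix.transpose_add,
            Matrix.transpose_smul, hQsym.eq, hDsym.eq]
        · intro x hx
          rw [star_trivial, qf_eq_dot, qf_add, qf_smul]
          have h1 := hcq x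
          have h2 := hsK x
          have hxn : 0 < ‖x‖ := norm_pos_iff.mpr hx
          have h3 := neg_abs_le (s * qf D x)
          nlinarith [pow_pos hxn 2]
      · intro i
        simp [Matrix.add_apply, hQdiag i, hDdiag i]
      · intro v hv
        have hsplit : intQuadForm (Q + s • D) v
            = intQuadForm Q v + s * qf D (fun i => (v i : ℝ)) := by
          rw [intQuadForm_eq_qf, qf_add, qf_smul, ← intQuadForm_eq_qf]
        rw [hsplit]
        rcases eq_or_ne (intQuadForm Q v) 1 with h1 | h1
        · rw [hDM v ⟨hv, h1⟩, mul_zero, add_zero, h1]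
        · have hgt : 1 < intQuadForm Q v := lt_of_le_of_ne (hQint v hv) (Ne.symm h1)
          by_cases hbig : 2 ≤ c * ‖(fun i => (v i : ℝ))‖ ^ 2
          · have h2 := hcq (fun i => (v i : ℝ))
            rw [← intQuadForm_eq_qf] at h2
            have h3 := hsK (fun i => (v i : ℝ))
            have h4 := neg_abs_le (s * qf D (fun i => (v i : ℝ)))
            linarith
          · have hvF : v ∈ hFfin.toFinset := by
              rw [Set.Finite.mem_toFinset]
              exact ⟨hv, h1, lt_of_not_ge hbig⟩
            have h4 := ht₂F v hvF
            have h5 : |s * qf D (fun i => (v i : ℝ))|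
                ≤ t₂ * |qf D (fun i => (v i : ℝ))| := by
              rw [abs_mul]
              exact mul_le_mul_of_nonneg_right
                (hs.trans (min_le_right _ _)) (abs_nonneg _)
            have h6 := neg_abs_le (s * qf D (fun i => (v i : ℝ)))
            linarith
    have hopen : Q ∈ openSegment ℝ (Q + (-t) • D) (Q + t • D) := by
      refine ⟨1/2, 1/2, by norm_num, by norm_num, by norm_num, ?_⟩
      module
    have hA := hQext (hmem (-t) (by rw [abs_neg, abs_of_pos ht0]))
      (hmem t (by rw [abs_of_pos ht0])) hopen
    have hzero : (-t) • D = 0 := by rwa [add_eq_left] at hA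
    rcases smul_eq_zero.mp hzero with h | h
    · exact absurd h (neg_ne_zero.mpr ht0.ne')
    · exact hDne h
  · -- Case A : extract enough minimal vectors
    obtain ⟨b, hbsub, hbspan, hbli⟩ := exists_linearIndependent ℝ (phi '' M)
    have hbfin : b.Finite := hbli.setFinite
    haveI := hbfin.fintype
    have hcard : b.toFinset.card = Fintype.card {p : Fin n × Fin n // p.1 < p.2} := by
      have h1 := finrank_span_set_eq_card hbli
      rw [hbspan, heq, finrank_span_eq_card psi_li] at h1
      exact h1.symm
    have hcardT : Fintype.card ↥hbfin.toFinset
        = Fintype.card {p : Fin n × Fin n // p.1 < p.2} := by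
      rw [Fintype.card_coe, Set.Finite.toFinset_eq_toFinset, hcard]
    have e2 : (Fin n ⊕ ↥hbfin.toFinset) ≃ Fin (n * (n + 1) / 2) :=
      (Equiv.sumCongr (Equiv.refl _) ((Fintype.equivFin _).trans (finCongr hcardT))).trans
        (finSumFinEquiv.trans (finCongr harith))
    have hpick : ∀ x : ↥hbfin.toFinset, ∃ u, u ∈ M ∧ phi u = ↑x := by
      intro x
      have hxb : (↑x : (Fin n × Fin n) → ℝ) ∈ b := (Set.Finite.mem_toFinset hbfin).mp x.2
      obtain ⟨u, hu, he⟩ := hbsub hxb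
      exact ⟨u, hu, he⟩
    choose pick hpickM hpickphi using hpick
    have hxne : ∀ x : ↥hbfin.toFinset, (↑x : (Fin n × Fin n) → ℝ) ≠ 0 := by
      intro x
      exact hbli.ne_zero ⟨↑x, (Set.Finite.mem_toFinset hbfin).mp x.2⟩
    have hmemall : ∀ a : Fin n ⊕ ↥hbfin.toFinset,
        Sum.elim bvec pick a ≠ 0 ∧ intQuadForm Q (Sum.elim bvec pick a) = 1 := by
      rintro (i | x)
      · exact ⟨bvec_ne_zero i, by rw [Sum.elim_inl, intQuadForm_bvec, hQdiag]⟩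
      · exact ⟨(hpickM x).1, (hpickM x).2⟩
    have hpair : ∀ a a' : Fin n ⊕ ↥hbfin.toFinset, a ≠ a' →
        Sum.elim bvec pick a ≠ Sum.elim bvec pick a' ∧
        Sum.elim bvec pick a ≠ -Sum.elim bvec pick a' := by
      rintro (i | x) (i' | x') hne
      · simp only [Sum.elim_inl]
        have hii : i ≠ i' := fun h => hne (by rw [h])
        constructor
        · intro h
          have h2 := congrFun h i
          simp [bvec, hii] at h2
        · intro h
          have h2 := congrFun h i
          simp [bvec, hii] at h2
      · simp only [Sum.elim_inl, Sum.elim_inr]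
        constructor
        · intro h
          exact hxne x' (by rw [← hpickphi x', ← h, phi_bvec])
        · intro h
          have h3 : pick x' = -(bvec i) := by rw [h, neg_neg]
          exact hxne x' (by rw [← hpickphi x', h3, phi_neg, phi_bvec])
      · simp only [Sum.elim_inl, Sum.elim_inr]
        constructor
        · intro h
          exact hxne x (by rw [← hpickphi x, h, phi_bvec])
        · intro h
          exact hxne x (by rw [← hpickphi x, h, phi_neg, phi_bvec])
      · simp only [Sum.elim_inr]
        have hxx : x ≠ x' := fun h => hne (by rw [h])
        have hcoe : (↑x : (Fin n × Fin n) → ℝ) ≠ ↑x' := fun h => hxx (Subtype.ext h)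
        constructor
        · intro h
          exact hcoe (by rw [← hpickphi x, ← hpickphi x', h])
        · intro h
          exact hcoe (by rw [← hpickphi x, ← hpickphi x', h, phi_neg])
    refine ⟨fun j => Sum.elim bvec pick (e2.symm j), fun j => hmemall _, ?_⟩
    intro j l hjl
    exact hpair _ _ (fun h => hjl (by simpa using congrArg e2 h))
end
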